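/- The pruned backward coverability iteration terminates: for any downward-closed invariant I and target m_final, the sequence U_0 = (↑{m_final} if m_final ∈ I else ∅), U_{k+1} = ↑(pre(U_k) ∩ I) ∪ U_k reaches a fixpoint, i.e., there exists h with U_{h+1} = U_h, and then U_k = U_h for all k ≥ h. -/

import Mathlib

open Classical

/-- One step of transition `t`: `F p t` tokens consumed from `p`, `G t p` produced. -/
def Step {P T : Type*} (F : P → T → ℕ) (G : T → P → ℕ) (t : T) (m m' : P → ℕ) : Prop :=
  ∀ p, F p t ≤ m p ∧ m' p = m p - F p t + G t p

/-- One-step relation (union over transitions). -/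
def Step1 {P T : Type*} (F : P → T → ℕ) (G : T → P → ℕ) (m m' : P → ℕ) : Prop :=
  ∃ t, Step F G t m m'

/-- Many-step reachability. -/
def Reach {P T : Type*} (F : P → T → ℕ) (G : T → P → ℕ) : (P → ℕ) → (P → ℕ) → Prop :=
  Relation.ReflTransGen (Step1 F G)

/-- Upward closure. -/
def up {P : Type*} (S : Set (P → ℕ)) : Set (P → ℕ) := {u | ∃ m ∈ S, m ≤ u}

/-- Downward closure. -/
def down {P : Type*} (S : Set (P → ℕ)) : Set (P → ℕ) := {d | ∃ m ∈ S, d ≤ m}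

def UpwardClosed {P : Type*} (S : Set (P → ℕ)) : Prop := ∀ ⦃m m' : P → ℕ⦄, m ∈ S → m ≤ m' → m' ∈ S

def DownwardClosed {P : Type*} (S : Set (P → ℕ)) : Prop := ∀ ⦃m m' : P → ℕ⦄, m ∈ S → m' ≤ m → m' ∈ S

/-- One-step predecessors of `S`. -/
def pre {P T : Type*} (F : P → T → ℕ) (G : T → P → ℕ) (S : Set (P → ℕ)) : Set (P → ℕ) :=
  {m | ∃ m' ∈ S, Step1 F G m m'}

/-- Predecessors via transition `t`. -/
def preT {P T : Type*} (F : P → T → ℕ) (G : T → P → ℕ) (t : T) (S : Set (P → ℕ)) : Set (P → ℕ) :=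
  {m | ∃ m' ∈ S, Step F G t m m'}

/-- Many-step predecessors of `S`. -/
def preStar {P T : Type*} (F : P → T → ℕ) (G : T → P → ℕ) (S : Set (P → ℕ)) : Set (P → ℕ) :=
  {m | ∃ m' ∈ S, Reach F G m m'}

/-- The coverability set. -/
def Cov {P T : Type*} (F : P → T → ℕ) (G : T → P → ℕ) (minit : P → ℕ) : Set (P → ℕ) :=
  down {m | Reach F G minit m}

/-- Pruned backward iteration sequence. -/
noncomputable def Useq {P T : Type*} (F : P → T → ℕ) (G : T → P → ℕ)
    (I : Set (P → ℕ)) (mfin : P → ℕ) : ℕ → Set (P → ℕ)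
  | 0 => if mfin ∈ I then up {mfin} else ∅
  | k + 1 => up (pre F G (Useq F G I mfin k) ∩ I) ∪ Useq F G I mfin k

lemma up_upward {P : Type*} (S : Set (P → ℕ)) : UpwardClosed (up S) := by
  rintro m m' ⟨n, hn, hle⟩ h
  exact ⟨n, hn, le_trans hle h⟩

lemma Useq_upward {P T : Type*} (F : P → T → ℕ) (G : T → P → ℕ)
    (I : Set (P → ℕ)) (mfin : P → ℕ) : ∀ k, UpwardClosed (Useq F G I mfin k) := by
  intro k
  induction k with
  | zero =>
    simp only [Useq]
    split
    · exact up_upward _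
    · intro m m' h; exact absurd h (Set.notMem_empty m)
  | succ k ih =>
    intro m m' hm hle
    rcases hm with h | h
    · exact Or.inl (up_upward _ h hle)
    · exact Or.inr (ih h hle)

lemma Useq_mono {P T : Type*} (F : P → T → ℕ) (G : T → P → ℕ)
    (I : Set (P → ℕ)) (mfin : P → ℕ) (k : ℕ) :
    Useq F G I mfin k ⊆ Useq F G I mfin (k + 1) := by
  intro m hm; exact Or.inr hm

theorem stmt18 {P T : Type*} [Fintype P] (F : P → T → ℕ) (G : T → P → ℕ)
    (mfin : P → ℕ) (I : Set (P → ℕ)) (hDown : DownwardClosed I) :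
    ∃ h, Useq F G I mfin (h + 1) = Useq F G I mfin h ∧
      ∀ k, h ≤ k → Useq F G I mfin k = Useq F G I mfin h := by
  by_cases hfix : ∃ h, Useq F G I mfin (h + 1) = Useq F G I mfin h
  · obtain ⟨h, hh⟩ := hfix
    refine ⟨h, hh, ?_⟩
    intro k hk
    induction k with
    | zero => have : h = 0 := Nat.le_zero.mp hk; rw [this]
    | succ k ih =>
      rcases Nat.lt_or_ge h (k + 1) with hlt | hge
      · have hkh : h ≤ k := Nat.lt_succ_iff.mp hlt
        have : Useq F G I mfin k = Useq F G I mfin h := ih hkh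
        show up (pre F G (Useq F G I mfin k) ∩ I) ∪ Useq F G I mfin k = _
        rw [this]
        exact hh
      · have : h = k + 1 := le_antisymm hk hge
        rw [this]
  · exfalso
    push_neg at hfix
    -- pick witnesses
    have hchoice : ∀ k, ∃ m, m ∈ Useq F G I mfin (k + 1) ∧ m ∉ Useq F G I mfin k := by
      intro k
      by_contra hc
      push_neg at hc
      apply hfix k
      apply Set.Subset.antisymm
      · intro m hm
        by_contra hmm
        exact hmm (hc m hm)
      · exact Useq_mono F G I mfin k
    choose f hf1 hf2 using hchoice
    -- f is a bad sequence
    haveI : IsWellOrder ℕ (· < ·) := inferInstance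
    have hpwo : (Set.univ : Set (P → ℕ)).IsPWO := by
      simpa using Set.IsPWO.pi (fun _ : P => Set.IsPWO.of_linearOrder (Set.univ : Set ℕ))
    obtain ⟨i, j, hij, hle⟩ := hpwo.exists_lt (f := f) (fun n => Set.mem_univ _)
    -- f i ∈ U_{i+1} ⊆ U_j, then f j ∈ U_j, contradiction
    have hsub : Useq F G I mfin (i + 1) ⊆ Useq F G I mfin j := by
      have : ∀ a b, a ≤ b → Useq F G I mfin a ⊆ Useq F G I mfin b := by
        intro a b hab
        induction hab with
        | refl => exact le_refl _
        | step _ ih => exact Set.Subset.trans ih (Useq_mono F G I mfin _)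
      exact this _ _ hij
    exact hf2 j (Useq_upward F G I mfin j (hsub (hf1 i)) hle)
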